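/- In the setting with 2 agents, 2 divisible items, multi-dimensional additive valuations, and budgets b, assume v 1 1 > v 2 1, v 1 2 > v 2 2, b 1 > v 1 1, and v 1 1 * v 2 2 > v 1 2 * v 2 1. Then every outcome (x, p) that respects budgets, is individually rational, and is Pareto optimal satisfies: if p 1 < b 1 then x 1 1 = 1 and x 1 2 = 1, and if p 1 = b 1 then x 1 1 = 1 and x 1 2 > 0. -/

import Mathlib

open Finset

/-- A feasible (divisible) allocation: fractions in `[0,1]` and each item sold at most once.
Agents/items are indexed from `0` (paper's agent/item `k` is index `k-1`). -/
def Feasible (n m : ℕ) (x : Fin n → Fin m → ℝ) : Prop :=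
  (∀ i j, 0 ≤ x i j ∧ x i j ≤ 1) ∧ ∀ j, ∑ i, x i j ≤ 1

/-- Agent `i`'s (additive, multi-dimensional) value for allocation `x` under valuations `v`. -/
def agentValue {n m : ℕ} (v x : Fin n → Fin m → ℝ) (i : Fin n) : ℝ :=
  ∑ j, x i j * v i j

/-- Individual rationality of an outcome `(x, p)` under valuations `v`. -/
def IR {n m : ℕ} (v x : Fin n → Fin m → ℝ) (p : Fin n → ℝ) : Prop :=
  (∀ i, 0 ≤ agentValue v x i - p i) ∧ 0 ≤ ∑ i, p i

/-- Pareto optimality of an outcome `(x, p)` under valuations `v` and budgets `b`. -/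
def PO {n m : ℕ} (b : Fin n → ℝ) (v x : Fin n → Fin m → ℝ) (p : Fin n → ℝ) : Prop :=
  ¬ ∃ (x' : Fin n → Fin m → ℝ) (p' : Fin n → ℝ),
      Feasible n m x' ∧ (∀ i, p' i ≤ b i) ∧
      (∀ i, agentValue v x i - p i ≤ agentValue v x' i - p' i) ∧
      (∑ i, p i ≤ ∑ i, p' i) ∧
      ((∃ i, agentValue v x i - p i < agentValue v x' i - p' i) ∨ ∑ i, p i < ∑ i, p' i)

/-- The payment rule respects the public budgets `b` on every (nonnegative) profile. -/
def RespectsBudgets {n m : ℕ} (b : Fin n → ℝ)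
    (P : (Fin n → Fin m → ℝ) → Fin n → ℝ) : Prop :=
  ∀ v : Fin n → Fin m → ℝ, (∀ i j, 0 ≤ v i j) → ∀ i, P v i ≤ b i

/-- Incentive compatibility of a deterministic mechanism `(X, P)`. -/
def IC {n m : ℕ} (X : (Fin n → Fin m → ℝ) → Fin n → Fin m → ℝ)
    (P : (Fin n → Fin m → ℝ) → Fin n → ℝ) : Prop :=
  ∀ v : Fin n → Fin m → ℝ, (∀ i j, 0 ≤ v i j) →
    ∀ (i : Fin n) (v'i : Fin m → ℝ), (∀ j, 0 ≤ v'i j) →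
      agentValue v (X (Function.update v i v'i)) i - P (Function.update v i v'i) i ≤
        agentValue v (X v) i - P v i

/-- If agent 0 values item `j` strictly more than agent 1 and has slack budget,
then in any PO outcome agent 0 gets all of item `j`. -/
theorem aux_trade (v : Fin 2 → Fin 2 → ℝ) (b : Fin 2 → ℝ)
    (x : Fin 2 → Fin 2 → ℝ) (p : Fin 2 → ℝ)
    (hv : ∀ i j, 0 ≤ v i j)
    (hx : Feasible 2 2 x) (hbud : ∀ i, p i ≤ b i)
    (hPO : PO b v x p) (j : Fin 2)
    (hj : v 1 j < v 0 j) (hp : p 0 < b 0) : x 0 j = 1 := by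
  by_contra hne
  have hxlt : x 0 j < 1 := lt_of_le_of_ne (hx.1 0 j).2 hne
  have hv0j : 0 < v 0 j := lt_of_le_of_lt (hv 1 j) hj
  set ε : ℝ := min ((b 0 - p 0) / v 0 j) (1 - x 0 j) with hεdef
  have hε : 0 < ε := lt_min (div_pos (by linarith) hv0j) (by linarith)
  set ε' : ℝ := min ε (x 1 j) with hε'def
  have hε'0 : 0 ≤ ε' := le_min hε.le (hx.1 1 j).1
  have hε'ε : ε' ≤ ε := min_le_left _ _
  have hε'x : ε' ≤ x 1 j := min_le_right _ _
  have hεb : ε ≤ (b 0 - p 0) / v 0 j := min_le_left _ _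
  have hε1 : ε ≤ 1 - x 0 j := min_le_right _ _
  have hεb' : ε * v 0 j ≤ b 0 - p 0 := (le_div_iff₀ hv0j).mp hεb
  set x' : Fin 2 → Fin 2 → ℝ :=
    fun i k => x i k + (if k = j then (if i = 0 then ε else -ε') else 0) with hx'def
  set p' : Fin 2 → ℝ := fun i => if i = 0 then p 0 + ε * v 0 j else p 1 - ε' * v 1 j
    with hp'def
  have hj01 : j = 0 ∨ j = 1 := by omega
  have ep0 : p' 0 = p 0 + ε * v 0 j := by simp [hp'def]
  have ep1 : p' 1 = p 1 - ε' * v 1 j := by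
    simp only [hp'def]
    norm_num
  have e00 : x' 0 0 = x 0 0 + (if (0 : Fin 2) = j then ε else 0) := by
    simp [hx'def]
  have e01 : x' 0 1 = x 0 1 + (if (1 : Fin 2) = j then ε else 0) := by
    simp [hx'def]
  have e10 : x' 1 0 = x 1 0 + (if (0 : Fin 2) = j then -ε' else 0) := by
    simp only [hx'def]
    norm_num
  have e11 : x' 1 1 = x 1 1 + (if (1 : Fin 2) = j then -ε' else 0) := by
    simp only [hx'def]
    norm_num
  have e0 : agentValue v x' 0 = agentValue v x 0 + ε * v 0 j := by
    simp only [agentValue, Fin.sum_univ_two, e00, e01]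
    rcases hj01 with rfl | rfl <;> norm_num <;> ring
  have e1 : agentValue v x' 1 = agentValue v x 1 - ε' * v 1 j := by
    simp only [agentValue, Fin.sum_univ_two, e10, e11]
    rcases hj01 with rfl | rfl <;> norm_num <;> ring
  apply hPO
  refine ⟨x', p', ⟨?_, ?_⟩, ?_, ?_, ?_, Or.inr ?_⟩
  · intro i k
    by_cases hk : k = j
    · subst hk
      have h0 := (hx.1 0 k).1
      have h0' := (hx.1 0 k).2
      have h1 := (hx.1 1 k).1
      have h1' := (hx.1 1 k).2
      fin_cases i
      · constructor
        · show 0 ≤ x' 0 k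
          show 0 ≤ x 0 k + (if k = k then (if (0 : Fin 2) = 0 then ε else -ε') else 0)
          rw [if_pos rfl, if_pos rfl]; linarith
        · show x' 0 k ≤ 1
          show x 0 k + (if k = k then (if (0 : Fin 2) = 0 then ε else -ε') else 0) ≤ 1
          rw [if_pos rfl, if_pos rfl]; linarith
      · constructor
        · show 0 ≤ x' 1 k
          show 0 ≤ x 1 k + (if k = k then (if (1 : Fin 2) = 0 then ε else -ε') else 0)
          rw [if_pos rfl, if_neg (by decide)]; linarith
        · show x' 1 k ≤ 1
          show x 1 k + (if k = k then (if (1 : Fin 2) = 0 then ε else -ε') else 0) ≤ 1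
          rw [if_pos rfl, if_neg (by decide)]; linarith
    · constructor
      · show 0 ≤ x i k + (if k = j then (if i = 0 then ε else -ε') else 0)
        rw [if_neg hk, add_zero]
        exact (hx.1 i k).1
      · show x i k + (if k = j then (if i = 0 then ε else -ε') else 0) ≤ 1
        rw [if_neg hk, add_zero]
        exact (hx.1 i k).2
  · intro k
    rw [Fin.sum_univ_two]
    have hs := hx.2 k
    rw [Fin.sum_univ_two] at hs
    by_cases hk : k = j
    · subst hk
      rcases le_total ε (x 1 k) with h | h
      · have hmin : ε' = ε := min_eq_left h
        show x 0 k + (if k = k then (if (0 : Fin 2) = 0 then ε else -ε') else 0) + (x 1 k + (if k = k then (if (1 : Fin 2) = 0 then ε else -ε') else 0)) ≤ 1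
        rw [if_pos rfl, if_pos rfl, if_pos rfl, if_neg (show (1 : Fin 2) ≠ 0 by decide)]; linarith
      · have hmin : ε' = x 1 k := min_eq_right h
        show x 0 k + (if k = k then (if (0 : Fin 2) = 0 then ε else -ε') else 0) + (x 1 k + (if k = k then (if (1 : Fin 2) = 0 then ε else -ε') else 0)) ≤ 1
        rw [if_pos rfl, if_pos rfl, if_pos rfl, if_neg (show (1 : Fin 2) ≠ 0 by decide)]; linarith
    · have hk0 : x' 0 k = x 0 k := by
        show x 0 k + (if k = j then (if (0 : Fin 2) = 0 then ε else -ε') else 0) = x 0 k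
        rw [if_neg hk, add_zero]
      have hk1 : x' 1 k = x 1 k := by
        show x 1 k + (if k = j then (if (1 : Fin 2) = 0 then ε else -ε') else 0) = x 1 k
        rw [if_neg hk, add_zero]
      rw [hk0, hk1]
      linarith
  · intro i
    fin_cases i
    · show p' 0 ≤ b 0
      rw [ep0]; linarith
    · show p' 1 ≤ b 1
      rw [ep1]
      have := mul_nonneg hε'0 (hv 1 j)
      have := hbud 1
      linarith
  · intro i
    fin_cases i
    · show agentValue v x 0 - p 0 ≤ agentValue v x' 0 - p' 0
      rw [e0, ep0]; linarith
    · show agentValue v x 1 - p 1 ≤ agentValue v x' 1 - p' 1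
      rw [e1, ep1]; linarith
  · rw [Fin.sum_univ_two, Fin.sum_univ_two, ep0, ep1]
    have h1' : ε' * v 1 j ≤ ε * v 1 j := mul_le_mul_of_nonneg_right hε'ε (hv 1 j)
    have h2' : ε * v 1 j < ε * v 0 j := mul_lt_mul_of_pos_left hj hε
    linarith
  · rw [Fin.sum_univ_two, Fin.sum_univ_two, ep0, ep1]
    have h1' : ε' * v 1 j ≤ ε * v 1 j := mul_le_mul_of_nonneg_right hε'ε (hv 1 j)
    have h2' : ε * v 1 j < ε * v 0 j := mul_lt_mul_of_pos_left hj hε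
    linarith

/-- Lemma on Case 3: with 2 agents and 2 divisible items
(index 0 = paper's agent/item 1, index 1 = paper's agent/item 2), assume
`v 1 1 > v 2 1`, `v 1 2 > v 2 2`, `b 1 > v 1 1`, and `v 1 1 * v 2 2 > v 1 2 * v 2 1`.
Then in every IR and PO outcome respecting budgets: if `p 1 < b 1` then
`x 1 1 = 1` and `x 1 2 = 1`, and if `p 1 = b 1` then `x 1 1 = 1` and `x 1 2 > 0`. -/
theorem stmt4 (v : Fin 2 → Fin 2 → ℝ) (b : Fin 2 → ℝ)
    (x : Fin 2 → Fin 2 → ℝ) (p : Fin 2 → ℝ)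
    (hv : ∀ i j, 0 ≤ v i j) (hb : ∀ i, 0 ≤ b i)
    (hx : Feasible 2 2 x) (hbud : ∀ i, p i ≤ b i)
    (hIR : IR v x p) (hPO : PO b v x p)
    (h1 : v 1 0 < v 0 0) (h2 : v 1 1 < v 0 1) (h3 : v 0 0 < b 0)
    (h4 : v 0 1 * v 1 0 < v 0 0 * v 1 1) :
    (p 0 < b 0 → x 0 0 = 1 ∧ x 0 1 = 1) ∧
      (p 0 = b 0 → x 0 0 = 1 ∧ 0 < x 0 1) := by
  have hv00 : 0 < v 0 0 := lt_of_le_of_lt (hv 1 0) h1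
  have hv01 : 0 < v 0 1 := lt_of_le_of_lt (hv 1 1) h2
  have hx01pos : p 0 = b 0 → 0 < x 0 1 := by
    intro hpb
    by_contra hle
    push_neg at hle
    have hx01 : x 0 1 = 0 := le_antisymm hle (hx.1 0 1).1
    have hir := hIR.1 0
    simp only [agentValue, Fin.sum_univ_two, hx01] at hir
    have hx00 := (hx.1 0 0).2
    nlinarith [mul_nonneg (sub_nonneg.mpr hx00) hv00.le]
  have key2 : p 0 = b 0 → x 0 0 = 1 := by
    intro hpb
    have hx01p := hx01pos hpb
    by_contra hne
    have hxlt : x 0 0 < 1 := lt_of_le_of_ne (hx.1 0 0).2 hne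
    have hv11 : 0 < v 1 1 := by nlinarith [mul_nonneg (hv 0 1) (hv 1 0)]
    set ε : ℝ := min (1 - x 0 0) (x 0 1 * v 0 1 / v 0 0) with hεdef
    have hε : 0 < ε := lt_min (by linarith) (div_pos (mul_pos hx01p hv01) hv00)
    have hε1 : ε ≤ 1 - x 0 0 := min_le_left _ _
    have hεv : ε * v 0 0 ≤ x 0 1 * v 0 1 :=
      (le_div_iff₀ hv00).mp (min_le_right _ _)
    set δ : ℝ := ε * v 0 0 / v 0 1 with hδdef
    have hδ : 0 < δ := div_pos (mul_pos hε hv00) hv01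
    have hδx : δ ≤ x 0 1 := by
      rw [hδdef, div_le_iff₀ hv01]; linarith
    have hδv : δ * v 0 1 = ε * v 0 0 := div_mul_cancel₀ _ hv01.ne'
    set ε' : ℝ := min ε (x 1 0) with hε'def
    have hε'0 : 0 ≤ ε' := le_min hε.le (hx.1 1 0).1
    have hε'ε : ε' ≤ ε := min_le_left _ _
    have hε'x : ε' ≤ x 1 0 := min_le_right _ _
    set x' : Fin 2 → Fin 2 → ℝ := fun i k =>
      if i = 0 then (if k = 0 then x 0 0 + ε else x 0 1 - δ)
      else (if k = 0 then x 1 0 - ε' else x 1 1 + δ) with hx'def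
    have e00 : x' 0 0 = x 0 0 + ε := by simp [hx'def]
    have e01 : x' 0 1 = x 0 1 - δ := by simp [hx'def]
    have e10 : x' 1 0 = x 1 0 - ε' := by simp only [hx'def]; norm_num
    have e11 : x' 1 1 = x 1 1 + δ := by simp only [hx'def]; norm_num
    have hs0 := hx.2 0
    have hs1 := hx.2 1
    rw [Fin.sum_univ_two] at hs0 hs1
    have e0 : agentValue v x' 0 = agentValue v x 0 + ε * v 0 0 - δ * v 0 1 := by
      simp only [agentValue, Fin.sum_univ_two, e00, e01]; ring
    have e1 : agentValue v x' 1 = agentValue v x 1 - ε' * v 1 0 + δ * v 1 1 := by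
      simp only [agentValue, Fin.sum_univ_two, e10, e11]; ring
    have hkey : ε' * v 1 0 < δ * v 1 1 := by
      have h7 : δ * v 1 1 * v 0 1 = ε * v 0 0 * v 1 1 := by
        rw [mul_right_comm, hδv]
      have h8 : ε * (v 0 1 * v 1 0) < ε * (v 0 0 * v 1 1) :=
        mul_lt_mul_of_pos_left h4 hε
      have h9 : ε * v 1 0 < δ * v 1 1 := by
        have h10 : ε * v 1 0 * v 0 1 < δ * v 1 1 * v 0 1 := by nlinarith
        exact lt_of_mul_lt_mul_right h10 hv01.le
      have h6 : ε' * v 1 0 ≤ ε * v 1 0 := mul_le_mul_of_nonneg_right hε'ε (hv 1 0)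
      linarith
    apply hPO
    refine ⟨x', p, ⟨?_, ?_⟩, hbud, ?_, le_refl _, Or.inl ⟨1, ?_⟩⟩
    · intro i k
      have h00 := (hx.1 0 0).1
      have h01 := (hx.1 0 1)
      have h10 := (hx.1 1 0)
      have h11 := (hx.1 1 1)
      fin_cases i <;> fin_cases k
      · show 0 ≤ x' 0 0 ∧ x' 0 0 ≤ 1
        rw [e00]; constructor <;> linarith
      · show 0 ≤ x' 0 1 ∧ x' 0 1 ≤ 1
        rw [e01]; constructor <;> linarith [h01.1, h01.2]
      · show 0 ≤ x' 1 0 ∧ x' 1 0 ≤ 1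
        rw [e10]; constructor <;> linarith [h10.1, h10.2]
      · show 0 ≤ x' 1 1 ∧ x' 1 1 ≤ 1
        rw [e11]; constructor <;> linarith [h11.1, h11.2]
    · intro k
      rw [Fin.sum_univ_two]
      fin_cases k
      · show x' 0 0 + x' 1 0 ≤ 1
        rw [e00, e10]
        rcases le_total ε (x 1 0) with h | h
        · have hmin : ε' = ε := min_eq_left h
          linarith
        · have hmin : ε' = x 1 0 := min_eq_right h
          linarith
      · show x' 0 1 + x' 1 1 ≤ 1
        rw [e01, e11]
        linarith
    · intro i
      fin_cases i
      · show agentValue v x 0 - p 0 ≤ agentValue v x' 0 - p 0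
        rw [e0]; linarith
      · show agentValue v x 1 - p 1 ≤ agentValue v x' 1 - p 1
        rw [e1]; linarith
    · show agentValue v x 1 - p 1 < agentValue v x' 1 - p 1
      rw [e1]; linarith
  exact ⟨fun hp => ⟨aux_trade v b x p hv hx hbud hPO 0 h1 hp,
      aux_trade v b x p hv hx hbud hPO 1 h2 hp⟩,
    fun hpb => ⟨key2 hpb, hx01pos hpb⟩⟩
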